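/- Let P(ξ) = 7/(4π) - (2/π) cos ξ + (1/(4π)) cos(2ξ) and define ψ̂(ξ) = 2π P(ξ)|sin ξ|/|ξ|³ for ξ ≠ 0. For every nonzero integer j, ψ̂(2πj) = 0 and ψ̂'(2πj) = 0. -/
import Mathlib


open Real

theorem stmt_6 (P ψhat : ℝ → ℝ)
    (hP : P = fun ξ => 7 / (4 * π) - (2 / π) * Real.cos ξ + (1 / (4 * π)) * Real.cos (2 * ξ))
    (hψ : ∀ ξ : ℝ, ξ ≠ 0 → ψhat ξ = 2 * π * P ξ * |Real.sin ξ| / |ξ| ^ 3)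
    (j : ℤ) (hj : j ≠ 0) :
    ψhat (2 * π * j) = 0 ∧ HasDerivAt ψhat 0 (2 * π * j) := by
  have hπ := Real.pi_pos
  set a : ℝ := 2 * π * j with ha_def
  have ha : a ≠ 0 := by
    refine mul_ne_zero (mul_ne_zero two_ne_zero (ne_of_gt hπ)) ?_
    exact_mod_cast hj
  have hcos : Real.cos a = 1 := by
    have : a = (j : ℝ) * (2 * π) := by rw [ha_def]; ring
    rw [this]; exact_mod_cast Real.cos_int_mul_two_pi j
  have hsin : Real.sin a = 0 := by
    have : a = ((2 * j : ℤ) : ℝ) * π := by rw [ha_def]; push_cast; ring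
    rw [this]; exact Real.sin_int_mul_pi (2 * j)
  have hψ0 : ψhat a = 0 := by
    rw [hψ a ha, hsin, abs_zero, mul_zero, zero_div]
  refine ⟨hψ0, ?_⟩
  -- key identity : 2π P ξ = (1 - cos ξ) * (3 - cos ξ)
  have hkey : ∀ ξ : ℝ, 2 * π * P ξ = (1 - Real.cos ξ) * (3 - Real.cos ξ) := by
    intro ξ
    rw [hP]
    simp only [Real.cos_two_mul]
    field_simp
    ring
  set u : ℝ → ℝ := fun ξ => (1 - Real.cos ξ) * (3 - Real.cos ξ) / |ξ| ^ 3 with hu_def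
  have hu_a : u a = 0 := by simp [hu_def, hcos]
  have hu_tendsto : Filter.Tendsto u (nhdsWithin a {a}ᶜ) (nhds 0) := by
    have hc : ContinuousAt u a := by
      apply ContinuousAt.div
      · fun_prop
      · fun_prop
      · positivity
    have := hc.tendsto.mono_left (nhdsWithin_le_nhds (s := {a}ᶜ))
    rwa [hu_a] at this
  rw [hasDerivAt_iff_tendsto_slope]
  refine (tendsto_zero_iff_abs_tendsto_zero (slope ψhat a)).mpr ?_
  apply squeeze_zero' (g := u)
  · filter_upwards with ξ using abs_nonneg _
  · have h1 : ∀ᶠ ξ in nhdsWithin a {a}ᶜ, ξ ≠ 0 :=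
      nhdsWithin_le_nhds (eventually_ne_nhds ha)
    have h2 : ∀ᶠ ξ in nhdsWithin a {a}ᶜ, ξ ≠ a :=
      eventually_mem_nhdsWithin
    filter_upwards [h1, h2] with ξ hξ0 hξa
    have hxa : (0:ℝ) < |ξ - a| := abs_pos.mpr (sub_ne_zero.mpr hξa)
    have hsinb : |Real.sin ξ| ≤ |ξ - a| := by
      have h4 : Real.sin ξ = Real.sin (ξ - a) := by
        have h5 := Real.sin_add_int_mul_two_pi (ξ - a) j
        have h6 : ξ - a + (j : ℝ) * (2 * π) = ξ := by rw [ha_def]; ring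
        rw [h6] at h5
        exact h5
      rw [h4]; exact Real.abs_sin_le_abs
    have hu_nonneg : 0 ≤ u ξ := by
      apply div_nonneg
      · apply mul_nonneg <;> nlinarith [Real.cos_le_one ξ, Real.neg_one_le_cos ξ]
      · positivity
    have hψξ : |ψhat ξ| = u ξ * |Real.sin ξ| := by
      rw [hψ ξ hξ0, mul_div_assoc, abs_mul, hu_def]
      have h3 : |2 * π * P ξ| = (1 - Real.cos ξ) * (3 - Real.cos ξ) := by
        rw [hkey ξ]
        apply abs_of_nonneg
        apply mul_nonneg <;> nlinarith [Real.cos_le_one ξ, Real.neg_one_le_cos ξ]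
      rw [h3, abs_div, abs_abs, abs_pow, abs_abs]
      ring
    simp only [Function.comp_apply]
    rw [slope_def_field, div_eq_mul_inv, ← div_eq_mul_inv, hψ0, sub_zero, abs_div, hψξ,
      div_le_iff₀ hxa]
    exact mul_le_mul_of_nonneg_left hsinb hu_nonneg
  · exact hu_tendsto
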